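/- Suppose ω is a differential form with a center at 0 over an algebraically closed field of characteristic 0, and the associated quadric F₂(ω,0) has rank 2. Then there exists an invertible linear change of coordinates g such that g(ω) = x dx + y dy + higher order terms, i.e., g(ω) is a Poincaré differential form. -/

import Mathlib

open MvPolynomial

namespace Stmt17


variable {K : Type*} [Field K]

lemma degree_eq_add (d : Fin 2 →₀ ℕ) : d.degree = d 0 + d 1 := by
  have : d.degree = ∑ i : Fin 2, d i :=
    Finset.sum_subset (Finset.subset_univ _)
      (fun x _ hx => Finsupp.notMem_support_iff.mp hx)
  rw [this, Fin.sum_univ_two]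

lemma degree_single (i : Fin 2) : (Finsupp.single i 1).degree = 1 := by
  fin_cases i <;> simp [degree_eq_add, Finsupp.single_apply]

lemma eq_single_of_degree_one {d : Fin 2 →₀ ℕ} (hd : d.degree = 1) :
    d = Finsupp.single 0 1 ∨ d = Finsupp.single 1 1 := by
  rw [degree_eq_add] at hd
  rcases Nat.add_eq_one_iff.mp hd with ⟨h0, h1⟩ | ⟨h0, h1⟩
  · right; ext j; fin_cases j <;> simp [h0, h1, Finsupp.single_apply]
  · left; ext j; fin_cases j <;> simp [h0, h1, Finsupp.single_apply]

lemma eval_zero_pderiv (k : Fin 2) (p : MvPolynomial (Fin 2) K) :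
    eval 0 (pderiv k p) = coeff (Finsupp.single k 1) p := by
  induction p using MvPolynomial.induction_on' with
  | add p q hp hq => rw [map_add, map_add, coeff_add, hp, hq]
  | monomial s a =>
    rw [pderiv_monomial, eval_zero, constantCoeff_eq, coeff_monomial, coeff_monomial]
    rcases eq_or_ne s (Finsupp.single k 1) with rfl | hs
    · simp
    · rw [if_neg hs]
      split_ifs with h
      · rcases eq_or_ne (s k) 0 with hk | hk
        · simp [hk]
        · exfalso; apply hs
          have hj : ∀ j, s j - (Finsupp.single k 1) j = 0 := by
            intro j; rw [← Finsupp.tsub_apply, h]; rfl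
          ext j
          rcases eq_or_ne j k with rfl | hjk
          · have := hj j; simp only [Finsupp.single_eq_same] at this ⊢; omega
          · have := hj j
            rw [Finsupp.single_eq_of_ne hjk] at this ⊢
            omega
      · rfl

lemma pderiv_pderiv_comm (i j : Fin 2) (p : MvPolynomial (Fin 2) K) :
    pderiv i (pderiv j p) = pderiv j (pderiv i p) := by
  rcases eq_or_ne i j with rfl | hij
  · rfl
  · induction p using MvPolynomial.induction_on' with
    | add p q hp hq => simp [hp, hq]
    | monomial s a =>
      rw [pderiv_monomial, pderiv_monomial, pderiv_monomial, pderiv_monomial]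
      have h1 : ((s - Finsupp.single j 1 : Fin 2 →₀ ℕ)) i = s i := by
        rw [Finsupp.tsub_apply, Finsupp.single_eq_of_ne hij, Nat.sub_zero]
      have h2 : ((s - Finsupp.single i 1 : Fin 2 →₀ ℕ)) j = s j := by
        rw [Finsupp.tsub_apply, Finsupp.single_eq_of_ne (Ne.symm hij), Nat.sub_zero]
      rw [h1, h2, tsub_tsub, tsub_tsub, add_comm (Finsupp.single j 1), mul_right_comm]


variable {K : Type*} [Field K]

lemma phi_hom (M : Matrix (Fin 2) (Fin 2) K) (i : Fin 2) :
    IsHomogeneous (∑ j, C (M i j) * X j : MvPolynomial (Fin 2) K) 1 :=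
  IsHomogeneous.sum _ _ _ fun j _ => isHomogeneous_C_mul_X _ _

lemma coeff_phi (M : Matrix (Fin 2) (Fin 2) K) (i k : Fin 2) :
    coeff (Finsupp.single k 1) (∑ j, C (M i j) * X j) = M i k := by
  rw [Fin.sum_univ_two, coeff_add, coeff_C_mul, coeff_C_mul, coeff_X', coeff_X']
  fin_cases k <;>
    simp [Finsupp.single_eq_single_iff]

lemma aeval_monomial' (M : Matrix (Fin 2) (Fin 2) K) (s : Fin 2 →₀ ℕ) (a : K) :
    aeval (fun i => ∑ j, C (M i j) * X j) (monomial s a)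
      = C a * ∏ i, (∑ j, C (M i j) * X j : MvPolynomial (Fin 2) K) ^ s i := by
  rw [aeval_monomial, algebraMap_eq, Finsupp.prod_fintype]
  exact fun i => pow_zero _

lemma hom_aeval_monomial (M : Matrix (Fin 2) (Fin 2) K) (s : Fin 2 →₀ ℕ) (a : K) :
    IsHomogeneous (aeval (fun i => ∑ j, C (M i j) * X j) (monomial s a)) s.degree := by
  rw [aeval_monomial']
  have h : IsHomogeneous (∏ i, (∑ j, C (M i j) * X j : MvPolynomial (Fin 2) K) ^ s i)
      (∑ i, s i) :=
    IsHomogeneous.prod _ _ _ fun i _ => by simpa using (phi_hom M i).pow (s i)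
  have := (isHomogeneous_C (Fin 2) a).mul h
  rwa [zero_add, Fin.sum_univ_two, ← degree_eq_add] at this

lemma coeff_zero_aeval (M : Matrix (Fin 2) (Fin 2) K) (p : MvPolynomial (Fin 2) K) :
    coeff 0 (aeval (fun i => ∑ j, C (M i j) * X j) p) = coeff 0 p := by
  induction p using MvPolynomial.induction_on' with
  | add p q hp hq => rw [map_add, coeff_add, coeff_add, hp, hq]
  | monomial s a =>
    rcases eq_or_ne s 0 with rfl | hs
    · simp [aeval_monomial']
    · rw [(hom_aeval_monomial M s a).coeff_eq_zero
        (d := 0) (by rw [map_zero]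
                     exact fun h => hs ((Finsupp.degree_eq_zero_iff s).mp h.symm))]
      simp [coeff_monomial, hs]

lemma coeff_single_aeval (M : Matrix (Fin 2) (Fin 2) K) (p : MvPolynomial (Fin 2) K)
    (k : Fin 2) :
    coeff (Finsupp.single k 1) (aeval (fun i => ∑ j, C (M i j) * X j) p)
      = ∑ i, coeff (Finsupp.single i 1) p * M i k := by
  induction p using MvPolynomial.induction_on' with
  | add p q hp hq =>
    simp only [map_add, coeff_add, hp, hq, add_mul, Finset.sum_add_distrib]
  | monomial s a =>
    by_cases hdeg : s.degree = 1
    · rcases eq_single_of_degree_one hdeg with rfl | rfl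
      · rw [aeval_monomial']
        have : (∏ i, (∑ j, C (M i j) * X j : MvPolynomial (Fin 2) K) ^ (Finsupp.single (0 : Fin 2) 1) i)
            = ∑ j, C (M 0 j) * X j := by
          rw [Fin.prod_univ_two]
          simp [Finsupp.single_apply]
        rw [this, coeff_C_mul, coeff_phi, Fin.sum_univ_two]
        simp [coeff_monomial, Finsupp.single_eq_single_iff]
      · rw [aeval_monomial']
        have : (∏ i, (∑ j, C (M i j) * X j : MvPolynomial (Fin 2) K) ^ (Finsupp.single (1 : Fin 2) 1) i)
            = ∑ j, C (M 1 j) * X j := by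
          rw [Fin.prod_univ_two]
          simp [Finsupp.single_apply]
        rw [this, coeff_C_mul, coeff_phi, Fin.sum_univ_two]
        simp [coeff_monomial, Finsupp.single_eq_single_iff]
    · rw [(hom_aeval_monomial M s a).coeff_eq_zero (by rw [degree_single]; exact fun h => hdeg h.symm)]
      rw [Fin.sum_univ_two]
      have h0 : s ≠ Finsupp.single (0 : Fin 2) 1 := fun h => hdeg (by rw [h, degree_single])
      have h1 : s ≠ Finsupp.single (1 : Fin 2) 1 := fun h => hdeg (by rw [h, degree_single])
      simp [coeff_monomial, if_neg h0, if_neg h1]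


variable {K : Type*} [Field K] [CharZero K] [IsAlgClosed K]

lemma exists_congr_matrix (a b c m : K) (hm : m ≠ 0) (hd : a * c - b * b ≠ 0) :
    ∃ M : Matrix (Fin 2) (Fin 2) K, M.det ≠ 0 ∧
      M.transpose * !![a, b; b, c] * M = m • (1 : Matrix (Fin 2) (Fin 2) K) := by
  by_cases ha : a ≠ 0
  · have had : a * (a * c - b * b) ≠ 0 := mul_ne_zero ha hd
    obtain ⟨s, hs⟩ := IsAlgClosed.exists_pow_nat_eq (m / a) two_pos
    obtain ⟨t, ht⟩ := IsAlgClosed.exists_pow_nat_eq (m / (a * (a * c - b * b))) two_pos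
    rw [eq_div_iff ha] at hs
    rw [eq_div_iff had] at ht
    have hs0 : s ≠ 0 := by rintro rfl; apply hm; rw [← hs]; ring
    have ht0 : t ≠ 0 := by rintro rfl; apply hm; rw [← ht]; ring
    refine ⟨!![s, -(t * b); 0, t * a], ?_, ?_⟩
    · rw [Matrix.det_fin_two_of]
      simpa using mul_ne_zero hs0 (mul_ne_zero ht0 ha)
    · ext i j
      fin_cases i <;> fin_cases j <;>
        simp only [Matrix.mul_apply, Matrix.transpose_apply, Fin.sum_univ_two,
          Matrix.smul_apply, Matrix.one_apply, Matrix.cons_val_zero, Matrix.cons_val_one,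
          Matrix.head_cons, Matrix.cons_val', Matrix.empty_val', Matrix.cons_val_fin_one,
          Matrix.head_fin_const, smul_eq_mul, Fin.zero_eta, Fin.mk_one, ite_true, ite_false,
          one_ne_zero, zero_ne_one, if_true, if_false, mul_one, mul_zero, Fin.isValue,
          Matrix.of_apply] <;>
        first
          | linear_combination hs
          | linear_combination ht
          | ring
  · push_neg at ha
    subst ha
    by_cases hc : c ≠ 0
    · have hcd : c * (0 * c - b * b) ≠ 0 := mul_ne_zero hc hd
      obtain ⟨s, hs⟩ := IsAlgClosed.exists_pow_nat_eq (m / c) two_pos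
      obtain ⟨t, ht⟩ := IsAlgClosed.exists_pow_nat_eq (m / (c * (0 * c - b * b))) two_pos
      rw [eq_div_iff hc] at hs
      rw [eq_div_iff hcd] at ht
      have hs0 : s ≠ 0 := by rintro rfl; apply hm; rw [← hs]; ring
      have ht0 : t ≠ 0 := by rintro rfl; apply hm; rw [← ht]; ring
      refine ⟨!![t * c, 0; -(t * b), s], ?_, ?_⟩
      · rw [Matrix.det_fin_two_of]
        simpa using mul_ne_zero (mul_ne_zero ht0 hc) hs0
      · ext i j
        fin_cases i <;> fin_cases j <;>
          simp only [Matrix.mul_apply, Matrix.transpose_apply, Fin.sum_univ_two,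
            Matrix.smul_apply, Matrix.one_apply, Matrix.cons_val_zero, Matrix.cons_val_one,
            Matrix.head_cons, Matrix.cons_val', Matrix.empty_val', Matrix.cons_val_fin_one,
            Matrix.head_fin_const, smul_eq_mul, Fin.zero_eta, Fin.mk_one, ite_true, ite_false,
            one_ne_zero, zero_ne_one, if_true, if_false, mul_one, mul_zero, Fin.isValue,
            Matrix.of_apply] <;>
          first
            | linear_combination hs
            | linear_combination ht
            | ring
    · push_neg at hc
      subst hc
      have hb : b ≠ 0 := by intro h; apply hd; rw [h]; ring
      have h2b : (2 : K) * b ≠ 0 := mul_ne_zero two_ne_zero hb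
      have h2b' : -((2 : K) * b) ≠ 0 := neg_ne_zero.mpr h2b
      obtain ⟨p, hp⟩ := IsAlgClosed.exists_pow_nat_eq (m / (2 * b)) two_pos
      obtain ⟨q, hq⟩ := IsAlgClosed.exists_pow_nat_eq (m / (-(2 * b))) two_pos
      rw [eq_div_iff h2b] at hp
      rw [eq_div_iff h2b'] at hq
      have hp0 : p ≠ 0 := by rintro rfl; apply hm; rw [← hp]; ring
      have hq0 : q ≠ 0 := by rintro rfl; apply hm; rw [← hq]; ring
      refine ⟨!![p, q; p, -q], ?_, ?_⟩
      · rw [Matrix.det_fin_two_of]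
        intro h
        apply hp0
        have : p * -q - q * p = -(2 * (p * q)) := by ring
        rw [this, neg_eq_zero] at h
        rcases mul_eq_zero.mp ((mul_eq_zero.mp h).resolve_left two_ne_zero) with h' | h'
        · exact h'
        · exact absurd h' hq0
      · ext i j
        fin_cases i <;> fin_cases j <;>
          simp only [Matrix.mul_apply, Matrix.transpose_apply, Fin.sum_univ_two,
            Matrix.smul_apply, Matrix.one_apply, Matrix.cons_val_zero, Matrix.cons_val_one,
            Matrix.head_cons, Matrix.cons_val', Matrix.empty_val', Matrix.cons_val_fin_one,
            Matrix.head_fin_const, smul_eq_mul, Fin.zero_eta, Fin.mk_one, ite_true, ite_false,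
            one_ne_zero, zero_ne_one, if_true, if_false, mul_one, mul_zero, Fin.isValue,
            Matrix.of_apply] <;>
          first
            | linear_combination hp
            | linear_combination hq
            | ring


variable {K : Type*} [Field K]

lemma homog_aux (R : MvPolynomial (Fin 2) K) (e : Fin 2)
    (h0 : coeff 0 R = 0)
    (hc : ∀ k : Fin 2, coeff (Finsupp.single k 1) R = if k = e then 1 else 0) :
    homogeneousComponent 0 R = 0 ∧ homogeneousComponent 1 R = X e := by
  constructor
  · rw [homogeneousComponent_zero, h0, map_zero]
  · apply MvPolynomial.ext
    intro d
    rw [coeff_homogeneousComponent]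
    by_cases hd : d.degree = 1
    · rw [if_pos hd]
      rcases eq_single_of_degree_one hd with rfl | rfl
      · rw [hc 0, coeff_X']
        fin_cases e <;> simp [Finsupp.single_eq_single_iff]
      · rw [hc 1, coeff_X']
        fin_cases e <;> simp [Finsupp.single_eq_single_iff]
    · rw [if_neg hd, coeff_X', if_neg fun h => hd (by rw [← h, degree_single])]

end Stmt17

/-- If `ω = P dx + Q dy` has a center at `0` over an algebraically closed field of
characteristic `0` (with first integral `F` satisfying `F(0) = 0`, `dF(0) = 0`) and the
associated quadric `F₂(ω,0)` has rank 2 (its Hessian at `0` is invertible), then there is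
an invertible linear change of coordinates `M` (acting by substitution on `x, y` and on
`dx, dy`) transforming `ω` into a Poincaré differential form
`(x + h.o.t.) dx + (y + h.o.t.) dy`. -/
theorem stmt_17 {K : Type*} [Field K] [CharZero K] [IsAlgClosed K]
    (P Q μ F : MvPolynomial (Fin 2) K)
    (hP0 : eval 0 P = 0) (hQ0 : eval 0 Q = 0)
    (hμ : eval 0 μ ≠ 0)
    (hFx : pderiv 0 F = μ * P) (hFy : pderiv 1 F = μ * Q)
    (hF0 : eval 0 F = 0)
    (hdF0 : eval 0 (pderiv 0 F) = 0 ∧ eval 0 (pderiv 1 F) = 0)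
    (hrank : IsUnit (Matrix.of fun i j : Fin 2 => eval 0 (pderiv i (pderiv j F))).det) :
    ∃ M : Matrix (Fin 2) (Fin 2) K, IsUnit M.det ∧
      ∃ P' Q' : MvPolynomial (Fin 2) K,
        P' = C (M 0 0) * aeval (fun i => ∑ j, C (M i j) * X j) P
           + C (M 1 0) * aeval (fun i => ∑ j, C (M i j) * X j) Q ∧
        Q' = C (M 0 1) * aeval (fun i => ∑ j, C (M i j) * X j) P
           + C (M 1 1) * aeval (fun i => ∑ j, C (M i j) * X j) Q ∧
        homogeneousComponent 0 P' = 0 ∧ homogeneousComponent 0 Q' = 0 ∧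
        homogeneousComponent 1 P' = X 0 ∧ homogeneousComponent 1 Q' = X 1 := by
  classical
  set a := eval 0 (pderiv 0 (pderiv 0 F)) with ha_def
  set b := eval 0 (pderiv 0 (pderiv 1 F)) with hb_def
  set c := eval 0 (pderiv 1 (pderiv 1 F)) with hc_def
  have hb' : eval 0 (pderiv 1 (pderiv 0 F)) = b := by
    rw [hb_def, Stmt17.pderiv_pderiv_comm]
  have hdet : a * c - b * b ≠ 0 := by
    have h := hrank.ne_zero
    rw [Matrix.det_fin_two] at h
    simp only [Matrix.of_apply] at h
    rw [hb', ← ha_def, ← hb_def, ← hc_def] at h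
    exact h
  -- linear coefficients of P and Q
  have hcP : ∀ i : Fin 2, eval 0 (pderiv i (pderiv 0 F))
      = eval 0 μ * coeff (Finsupp.single i 1) P := by
    intro i
    rw [hFx, pderiv_mul, map_add, map_mul, map_mul, hP0, mul_zero, zero_add,
      Stmt17.eval_zero_pderiv]
  have hcQ : ∀ i : Fin 2, eval 0 (pderiv i (pderiv 1 F))
      = eval 0 μ * coeff (Finsupp.single i 1) Q := by
    intro i
    rw [hFy, pderiv_mul, map_add, map_mul, map_mul, hQ0, mul_zero, zero_add,
      Stmt17.eval_zero_pderiv]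
  obtain ⟨M, hMdet, hM⟩ := Stmt17.exists_congr_matrix a b c (eval 0 μ) hμ hdet
  have key : ∀ k l : Fin 2,
      M 0 k * (a * M 0 l + b * M 1 l) + M 1 k * (b * M 0 l + c * M 1 l)
        = eval 0 μ * (if k = l then 1 else 0) := by
    intro k l
    have h := congrFun (congrFun hM k) l
    simp only [Matrix.mul_apply, Matrix.transpose_apply, Fin.sum_univ_two,
      Matrix.smul_apply, smul_eq_mul, Matrix.one_apply, Matrix.cons_val_zero,
      Matrix.cons_val_one, Matrix.head_cons, Matrix.cons_val', Matrix.empty_val',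
      Matrix.cons_val_fin_one, Matrix.head_fin_const, Matrix.of_apply] at h
    linear_combination h
  refine ⟨M, isUnit_iff_ne_zero.mpr hMdet,
    C (M 0 0) * aeval (fun i => ∑ j, C (M i j) * X j) P
      + C (M 1 0) * aeval (fun i => ∑ j, C (M i j) * X j) Q,
    C (M 0 1) * aeval (fun i => ∑ j, C (M i j) * X j) P
      + C (M 1 1) * aeval (fun i => ∑ j, C (M i j) * X j) Q,
    rfl, rfl, ?_⟩
  have hzero : ∀ l : Fin 2,
      coeff 0 (C (M 0 l) * aeval (fun i => ∑ j, C (M i j) * X j) P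
        + C (M 1 l) * aeval (fun i => ∑ j, C (M i j) * X j) Q) = 0 := by
    intro l
    rw [coeff_add, coeff_C_mul, coeff_C_mul, Stmt17.coeff_zero_aeval,
      Stmt17.coeff_zero_aeval, ← constantCoeff_eq, ← eval_zero, hP0, hQ0,
      mul_zero, mul_zero, add_zero]
  have hlin : ∀ k l : Fin 2,
      coeff (Finsupp.single k 1)
        (C (M 0 l) * aeval (fun i => ∑ j, C (M i j) * X j) P
          + C (M 1 l) * aeval (fun i => ∑ j, C (M i j) * X j) Q)
        = if k = l then 1 else 0 := by
    intro k l
    apply mul_left_cancel₀ hμ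
    rw [coeff_add, coeff_C_mul, coeff_C_mul, Stmt17.coeff_single_aeval,
      Stmt17.coeff_single_aeval, Fin.sum_univ_two, Fin.sum_univ_two]
    have e1 := hcP 0
    have e2 := hcP 1
    have e3 := hcQ 0
    have e4 := hcQ 1
    rw [← ha_def] at e1
    rw [← hb_def] at e3
    rw [hb'] at e2
    rw [← hc_def] at e4
    linear_combination (key k l) - M 0 l * M 0 k * e1 - M 0 l * M 1 k * e2
      - M 1 l * M 0 k * e3 - M 1 l * M 1 k * e4
  obtain ⟨hP0', hP1'⟩ := Stmt17.homog_aux _ 0 (hzero 0) (fun k => hlin k 0)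
  obtain ⟨hQ0', hQ1'⟩ := Stmt17.homog_aux _ 1 (hzero 1) (fun k => hlin k 1)
  exact ⟨hP0', hQ0', hP1', hQ1'⟩
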